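/- The discrete symplectic system is definite on ℕ₀ if and only if there exists a finite discrete interval I ⊂ ℕ₀ on which the system is definite. -/

import Mathlib

open Matrix
open scoped ComplexOrder

/-- Iterated backward-transition matrices. -/
noncomputable def auxM {m : Type*} [Fintype m] [DecidableEq m] (A : ℕ → Matrix m m ℂ) :
    ℕ → Matrix m m ℂ :=
  fun k => Nat.rec 1 (fun k Mk => A k * Mk) k

/-- Lemma 3.3: the system is definite on `ℕ₀` iff it is definite on some finite
discrete interval. -/
theorem stmt15 (n : ℕ)
    (J : Matrix (Fin n ⊕ Fin n) (Fin n ⊕ Fin n) ℂ)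
    (hJ : J = Matrix.fromBlocks 0 1 (-1) 0)
    (S Ψ : ℕ → Matrix (Fin n ⊕ Fin n) (Fin n ⊕ Fin n) ℂ)
    (hS : ∀ k : ℕ, (S k)ᴴ * J * S k = J)
    (hΨpsd : ∀ k : ℕ, (Ψ k).PosSemidef)
    (hΨJ : ∀ k : ℕ, Ψ k * J * Ψ k = 0) :
    (∀ (l : ℂ) (z : ℕ → (Fin n ⊕ Fin n) → ℂ),
        (∀ k : ℕ, z k = (S k - l • (J * Ψ k * S k)) *ᵥ z (k + 1)) → z ≠ 0 →
        0 < ∑' k : ℕ, ENNReal.ofReal ((star (z k) ⬝ᵥ (Ψ k *ᵥ z k)).re)) ↔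
      (∃ a b : ℕ, ∀ (l : ℂ) (z : ℕ → (Fin n ⊕ Fin n) → ℂ),
        (∀ k : ℕ, z k = (S k - l • (J * Ψ k * S k)) *ᵥ z (k + 1)) → z ≠ 0 →
        0 < ∑ k ∈ Finset.Icc a b, ((star (z k) ⬝ᵥ (Ψ k *ᵥ z k)).re)) := by
  -- basic positivity facts about the quadratic form
  have hterm : ∀ (k : ℕ) (x : (Fin n ⊕ Fin n) → ℂ),
      0 ≤ (star x ⬝ᵥ (Ψ k *ᵥ x)).re ∧ (star x ⬝ᵥ (Ψ k *ᵥ x)).im = 0 := by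
    intro k x
    have h := (hΨpsd k).dotProduct_mulVec_nonneg x
    rw [Complex.le_def] at h
    simpa using ⟨h.1, h.2.symm⟩
  -- J is invertible with inverse -J
  have hJJ : J * J = -1 := by
    subst hJ
    rw [Matrix.fromBlocks_multiply]
    simp only [Matrix.zero_mul, Matrix.mul_zero, Matrix.one_mul, Matrix.mul_one,
      Matrix.mul_neg, Matrix.neg_mul, zero_add, add_zero, neg_zero]
    rw [← Matrix.fromBlocks_one, Matrix.fromBlocks_neg]
    simp
  -- explicit inverse of S k
  set Si : ℕ → Matrix (Fin n ⊕ Fin n) (Fin n ⊕ Fin n) ℂ :=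
    fun k => (-J) * ((S k)ᴴ * J) with hSi
  have hSiS : ∀ k, Si k * S k = 1 := by
    intro k
    show (-J) * ((S k)ᴴ * J) * S k = 1
    rw [Matrix.mul_assoc, hS k, Matrix.neg_mul, hJJ, neg_neg]
  have hSSi : ∀ k, S k * Si k = 1 := fun k => mul_eq_one_comm.mp (hSiS k)
  -- the transition matrix is invertible
  have hTinv : ∀ (k : ℕ) (l : ℂ),
      (Si k * (1 + l • (J * Ψ k))) * (S k - l • (J * Ψ k * S k)) = 1 := by
    intro k l
    have hfac : S k - l • (J * Ψ k * S k) = (1 - l • (J * Ψ k)) * S k := by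
      rw [Matrix.sub_mul, Matrix.one_mul, Matrix.smul_mul]
    have hnil : (J * Ψ k) * (J * Ψ k) = 0 := by
      have h := hΨJ k
      rw [Matrix.mul_assoc] at h
      rw [Matrix.mul_assoc, h, Matrix.mul_zero]
    have hmid : (1 + l • (J * Ψ k)) * (1 - l • (J * Ψ k)) = 1 := by
      have he : (1 + l • (J * Ψ k)) * (1 - l • (J * Ψ k))
          = 1 - (l * l) • ((J * Ψ k) * (J * Ψ k)) := by
        rw [Matrix.add_mul, Matrix.mul_sub, Matrix.mul_sub]
        simp only [Matrix.one_mul, Matrix.mul_one, Matrix.mul_smul, Matrix.smul_mul,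
          smul_smul]
        abel
      rw [he, hnil]
      simp
    rw [hfac, Matrix.mul_assoc, ← Matrix.mul_assoc (1 + l • (J * Ψ k)), hmid,
      Matrix.one_mul, hSiS k]
  -- a solution vanishing at 0 vanishes everywhere
  have hzero : ∀ (l : ℂ) (z : ℕ → (Fin n ⊕ Fin n) → ℂ),
      (∀ k : ℕ, z k = (S k - l • (J * Ψ k * S k)) *ᵥ z (k + 1)) → z 0 = 0 →
      z = 0 := by
    intro l z hz h0
    funext k
    induction k with
    | zero => simpa using h0
    | succ k ih =>
      have h1 : (S k - l • (J * Ψ k * S k)) *ᵥ z (k + 1) = 0 := by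
        rw [← hz k, ih]; rfl
      have h2 := congrArg (fun v => (Si k * (1 + l • (J * Ψ k))) *ᵥ v) h1
      simpa [Matrix.mulVec_mulVec, hTinv k l] using h2
  constructor
  · -- definite on ℕ → definite on a finite interval
    intro hdef
    by_contra hno
    push_neg at hno
    -- the λ-independent extension matrices
    set M : ℕ → Matrix (Fin n ⊕ Fin n) (Fin n ⊕ Fin n) ℂ := auxM Si with hM
    have hMsucc : ∀ k, M (k+1) = Si k * M k := by intro k; rw [hM]; rfl
    -- kernels
    set V : ℕ → Submodule ℂ ((Fin n ⊕ Fin n) → ℂ) :=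
      fun N => ⨅ k ∈ Set.Iic N, LinearMap.ker ((Ψ k * M k).mulVecLin) with hV
    have hVmem : ∀ N c, c ∈ V N ↔ ∀ k ≤ N, Ψ k *ᵥ (M k *ᵥ c) = 0 := by
      intro N c
      simp [hV, Submodule.mem_iInf, Matrix.mulVecLin_apply, Matrix.mulVec_mulVec,
        Set.mem_Iic]
    have hVanti : ∀ {N N'}, N ≤ N' → V N' ≤ V N := by
      intro N N' h c hc
      rw [hVmem] at hc ⊢
      exact fun k hk => hc k (hk.trans h)
    -- each V N is nontrivial
    have hVne : ∀ N, V N ≠ ⊥ := by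
      intro N
      obtain ⟨l, z, hz, hz0, hsum⟩ := hno 0 N
      -- each term in the sum vanishes
      have hre : ∀ k ∈ Finset.Icc 0 N, (star (z k) ⬝ᵥ (Ψ k *ᵥ z k)).re = 0 :=
        (Finset.sum_eq_zero_iff_of_nonneg
          (fun k _ => (hterm k (z k)).1)).mp (le_antisymm hsum
            (Finset.sum_nonneg (fun k _ => (hterm k (z k)).1)))
      have hΨz : ∀ k ≤ N, Ψ k *ᵥ z k = 0 := by
        intro k hk
        have h1 : (star (z k) ⬝ᵥ (Ψ k *ᵥ z k)) = 0 := by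
          have := hre k (Finset.mem_Icc.mpr ⟨Nat.zero_le _, hk⟩)
          exact Complex.ext (by simpa using this) (by simpa using (hterm k (z k)).2)
        exact ((hΨpsd k).dotProduct_mulVec_zero_iff (z k)).mp h1
      -- on [0,N] the solution follows the λ-free system
      have hstep : ∀ k ≤ N, z k = S k *ᵥ z (k+1) := by
        intro k hk
        have hmat : Ψ k * (S k - l • (J * Ψ k * S k)) = Ψ k * S k := by
          rw [Matrix.mul_sub, Matrix.mul_smul]
          simp only [← Matrix.mul_assoc]
          rw [hΨJ k, Matrix.zero_mul]
          simp
        have hΨS : Ψ k *ᵥ (S k *ᵥ z (k+1)) = 0 := by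
          have h1 : Ψ k *ᵥ z k = (Ψ k * S k) *ᵥ z (k+1) := by
            rw [hz k, Matrix.mulVec_mulVec, hmat]
          rw [Matrix.mulVec_mulVec, ← h1, hΨz k hk]
        have h2 : (J * Ψ k * S k) *ᵥ z (k+1) = 0 := by
          rw [Matrix.mul_assoc, ← Matrix.mulVec_mulVec, ← Matrix.mulVec_mulVec, hΨS,
            Matrix.mulVec_zero]
        rw [hz k, Matrix.sub_mulVec, Matrix.smul_mulVec, h2]
        simp
      -- hence z k = M k *ᵥ z 0 on [0,N+1]
      have hMz : ∀ k, k ≤ N + 1 → z k = M k *ᵥ z 0 := by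
        intro k
        induction k with
        | zero =>
          intro _
          rw [hM]
          show z 0 = (1 : Matrix _ _ ℂ) *ᵥ z 0
          rw [Matrix.one_mulVec]
        | succ k ih =>
          intro hk
          have hkN : k ≤ N := Nat.lt_succ_iff.mp hk
          have h1 : z k = M k *ᵥ z 0 := ih (hkN.trans (Nat.le_succ N))
          have h2 : z k = S k *ᵥ z (k+1) := hstep k hkN
          have h3 : Si k *ᵥ z k = z (k+1) := by
            rw [h2, Matrix.mulVec_mulVec, hSiS k, Matrix.one_mulVec]
          rw [← h3, h1, hMsucc, Matrix.mulVec_mulVec]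
      have hz00 : z 0 ≠ 0 := fun h => hz0 (hzero l z hz h)
      rw [Submodule.ne_bot_iff]
      refine ⟨z 0, ?_, hz00⟩
      rw [hVmem]
      intro k hk
      rw [← hMz k (hk.trans (Nat.le_succ N)), hΨz k hk]
    -- pick a subspace of minimal dimension
    set f : ℕ → ℕ := fun N => Module.finrank ℂ (V N) with hf
    obtain ⟨N₀, hN₀⟩ : ∃ N₀, f N₀ = sInf (Set.range f) :=
      Nat.sInf_mem (Set.range_nonempty f)
    have hVstab : ∀ N, N₀ ≤ N → V N = V N₀ := by
      intro N hN
      refine Submodule.eq_of_le_of_finrank_le (hVanti hN) ?_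
      show f N₀ ≤ f N
      rw [hN₀]
      exact Nat.sInf_le ⟨N, rfl⟩
    obtain ⟨c, hc, hc0⟩ := (V N₀).ne_bot_iff.mp (hVne N₀)
    -- the limiting solution
    have hckey : ∀ k, Ψ k *ᵥ (M k *ᵥ c) = 0 := by
      intro k
      have h1 : c ∈ V (max k N₀) := by
        rw [hVstab (max k N₀) (le_max_right _ _)]; exact hc
      rw [hVmem] at h1
      exact h1 k (le_max_left _ _)
    set w : ℕ → (Fin n ⊕ Fin n) → ℂ := fun k => M k *ᵥ c with hw
    have hwsol : ∀ k : ℕ, w k = (S k - (0:ℂ) • (J * Ψ k * S k)) *ᵥ w (k + 1) := by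
      intro k
      show M k *ᵥ c = (S k - (0:ℂ) • (J * Ψ k * S k)) *ᵥ (M (k+1) *ᵥ c)
      rw [zero_smul, sub_zero, hMsucc, Matrix.mulVec_mulVec, ← Matrix.mul_assoc,
        hSSi k, Matrix.one_mul]
    have hwne : w ≠ 0 := by
      intro h
      apply hc0
      have h0 := congrFun h 0
      rw [hw] at h0
      simp only at h0
      rw [hM] at h0
      rw [show auxM Si 0 = (1 : Matrix _ _ ℂ) from rfl, Matrix.one_mulVec] at h0
      exact h0
    have hpos := hdef 0 w hwsol hwne
    have hzero' : ∀ k : ℕ, ENNReal.ofReal ((star (w k) ⬝ᵥ (Ψ k *ᵥ w k)).re) = 0 := by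
      intro k
      show ENNReal.ofReal ((star (w k) ⬝ᵥ (Ψ k *ᵥ (M k *ᵥ c))).re) = 0
      rw [hckey k]
      simp
    rw [tsum_congr hzero'] at hpos
    simp at hpos
  · -- definite on a finite interval → definite on ℕ
    rintro ⟨a, b, hab⟩ l z hz hz0
    have hsum := hab l z hz hz0
    obtain ⟨k, hk, hkpos⟩ : ∃ k ∈ Finset.Icc a b, 0 < (star (z k) ⬝ᵥ (Ψ k *ᵥ z k)).re := by
      by_contra h
      push_neg at h
      have hle : ∑ k ∈ Finset.Icc a b, (star (z k) ⬝ᵥ (Ψ k *ᵥ z k)).re ≤ 0 :=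
        Finset.sum_nonpos h
      exact absurd hsum (not_lt.mpr hle)
    calc (0 : ENNReal) < ENNReal.ofReal ((star (z k) ⬝ᵥ (Ψ k *ᵥ z k)).re) := by
          simpa [ENNReal.ofReal_pos] using hkpos
      _ ≤ ∑' k : ℕ, ENNReal.ofReal ((star (z k) ⬝ᵥ (Ψ k *ᵥ z k)).re) :=
          ENNReal.le_tsum k
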